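/- Let x′ > 0, λ < 0, y′ ∈ ℝ with 4(x′² + x′y′ − y′²) − 2λ² = −2, and set r′ = y′/x′. If 3x′ − y′ ≥ −2λ then x′²(9r′² − 14r′ + 1) ≥ 4; hence if (7 − 2√10)/9 < r′ < (7 + 2√10)/9 then 3x′ − y′ < −2λ. -/

import Mathlib

/-- With `x′ > 0`, `λ < 0`, `4(x′² + x′y′ − y′²) − 2λ² = −2` and `r′ = y′/x′`:
if `3x′ − y′ ≥ −2λ` then `x′²(9r′² − 14r′ + 1) ≥ 4`; hence if
`(7 − 2√10)/9 < r′ < (7 + 2√10)/9` then `3x′ − y′ < −2λ`. -/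
theorem iota1_slope_inequality (x' l y' r' : ℝ) (hx : 0 < x') (hl : l < 0)
    (heq : 4 * (x' ^ 2 + x' * y' - y' ^ 2) - 2 * l ^ 2 = -2) (hr : r' = y' / x') :
    (-2 * l ≤ 3 * x' - y' → 4 ≤ x' ^ 2 * (9 * r' ^ 2 - 14 * r' + 1)) ∧
    ((7 - 2 * Real.sqrt 10) / 9 < r' → r' < (7 + 2 * Real.sqrt 10) / 9 →
      3 * x' - y' < -2 * l) := by
  have hx0 : x' ≠ 0 := ne_of_gt hx
  have hexp : x' ^ 2 * (9 * r' ^ 2 - 14 * r' + 1) = 9 * y' ^ 2 - 14 * x' * y' + x' ^ 2 := by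
    rw [hr]; field_simp
  have key : -2 * l ≤ 3 * x' - y' → 4 ≤ x' ^ 2 * (9 * r' ^ 2 - 14 * r' + 1) := by
    intro h
    have h2 : (-2 * l) ^ 2 ≤ (3 * x' - y') ^ 2 := by nlinarith
    nlinarith
  refine ⟨key, fun h1 h2 => ?_⟩
  by_contra hc
  push_neg at hc
  have hk := key hc
  have hs : Real.sqrt 10 ^ 2 = 10 := Real.sq_sqrt (by norm_num)
  have hs0 : 0 < Real.sqrt 10 := Real.sqrt_pos.mpr (by norm_num)
  have hneg : 9 * r' ^ 2 - 14 * r' + 1 < 0 := by nlinarith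
  nlinarith [sq_nonneg x']
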